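/- Let q be an odd prime power and S a set of q+2 points of PG(2,q). Let x, y, z be distinct points of S_{4/3} such that the line joining x and y is the 3-secant to S at x (and hence also the 3-secant at y), while the lines joining z to x and z to y are bi-secants of S. Suppose Q is a nondegenerate quadratic form on F_q^3 vanishing at x, y and z such that, for each u ∈ {x,y,z}, the tangent line to S at u equals the polar line of u with respect to Q. Then the 3-secant to S at z is incident with the third point of S on the 3-secant through x and y, i.e. with the unique point of S on that line other than x and y. -/

import Mathlib

open Projectivization

abbrev Pt (F : Type) [Field F] : Type := Projectivization F (Fin 3 → F)

def IsLine (F : Type) [Field F] (W : Submodule F (Fin 3 → F)) : Prop :=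
  Module.finrank F W = 2

noncomputable def secantCount (F : Type) [Field F] (S : Set (Pt F))
    (W : Submodule F (Fin 3 → F)) : ℕ :=
  {p ∈ S | p.submodule ≤ W}.ncard

noncomputable def oddSecants (F : Type) [Field F] (S : Set (Pt F)) : ℕ :=
  {W : Submodule F (Fin 3 → F) | IsLine F W ∧ Odd (secantCount F S W)}.ncard

noncomputable def linesThroughWithCount (F : Type) [Field F] (S : Set (Pt F))
    (x : Pt F) (i : ℕ) : ℕ :=
  {W : Submodule F (Fin 3 → F) | IsLine F W ∧ x.submodule ≤ W ∧ secantCount F S W = i}.ncard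

noncomputable def S43 (F : Type) [Field F] [Fintype F] (S : Set (Pt F)) : Set (Pt F) :=
  {x ∈ S | linesThroughWithCount F S x 1 = 1 ∧ linesThroughWithCount F S x 3 = 1 ∧
    linesThroughWithCount F S x 2 = Fintype.card F - 1}

section ThreeSecAux

open Module

variable {F : Type} [Field F]

instance instFinitePt [Fintype F] : Finite (Pt F) := inferInstanceAs (Finite (Quotient _))

lemma pt_le_iff (p : Pt F) (W : Submodule F (Fin 3 → F)) :
    p.submodule ≤ W ↔ p.rep ∈ W := by
  rw [Projectivization.submodule_eq, Submodule.span_singleton_le_iff_mem]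

lemma sup_eq_span (p q : Pt F) :
    p.submodule ⊔ q.submodule = Submodule.span F {p.rep, q.rep} := by
  rw [Projectivization.submodule_eq, Projectivization.submodule_eq, ← Submodule.span_union,
    Set.singleton_union]

lemma pair_li {p q : Pt F} (h : p ≠ q) : LinearIndependent F ![p.rep, q.rep] := by
  rw [LinearIndependent.pair_iff]
  intro s t hst
  have ht : t = 0 := by
    by_contra ht
    apply h
    have hq : q.rep = (-s/t) • p.rep := by
      have h1 : t • q.rep = (-s) • p.rep := by
        rw [neg_smul]
        exact eq_neg_of_add_eq_zero_right hst
      rw [div_eq_mul_inv, mul_comm, mul_smul, ← h1, smul_smul, inv_mul_cancel₀ ht, one_smul]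
    have hqp : q = p := by
      conv_lhs => rw [← q.mk_rep]
      conv_rhs => rw [← p.mk_rep]
      rw [mk_eq_mk_iff']
      exact ⟨-s/t, hq.symm⟩
    exact hqp.symm
  rw [ht, zero_smul, add_zero, smul_eq_zero] at hst
  exact ⟨hst.resolve_right p.rep_nonzero, ht⟩

omit [Field F] in
lemma pair_range (v w : Fin 3 → F) : Set.range ![v, w] = {v, w} := by
  ext u
  constructor
  · rintro ⟨i, rfl⟩
    fin_cases i <;> simp
  · rintro (rfl | rfl)
    exacts [⟨0, rfl⟩, ⟨1, rfl⟩]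

lemma isLine_sup {p q : Pt F} (h : p ≠ q) : IsLine F (p.submodule ⊔ q.submodule) := by
  have h2 := pair_li h
  have key : finrank F (Submodule.span F (Set.range ![p.rep, q.rep])) = 2 := by
    rw [finrank_span_eq_card h2]
    simp
  show Module.finrank F ↥(p.submodule ⊔ q.submodule) = 2
  rw [sup_eq_span, ← pair_range p.rep q.rep]
  exact key

lemma line_eq_sup {p q : Pt F} (h : p ≠ q) {W : Submodule F (Fin 3 → F)} (hW : IsLine F W)
    (hp : p.submodule ≤ W) (hq : q.submodule ≤ W) : W = p.submodule ⊔ q.submodule := by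
  have hW2 : Module.finrank F W = 2 := hW
  refine (Submodule.eq_of_le_of_finrank_eq (sup_le hp hq) ?_).symm
  rw [hW2]
  exact isLine_sup h

lemma secant_one_eq [Fintype F] {S : Set (Pt F)} {W : Submodule F (Fin 3 → F)} {u : Pt F}
    (h1 : secantCount F S W = 1) (huS : u ∈ S) (huW : u.submodule ≤ W) :
    ∀ s ∈ S, s.submodule ≤ W → s = u := by
  have h1' : ({p ∈ S | p.submodule ≤ W}).ncard = 1 := h1
  obtain ⟨a, ha⟩ := Set.ncard_eq_one.1 h1'
  have hu : u ∈ ({a} : Set (Pt F)) := ha ▸ (⟨huS, huW⟩ : u ∈ {p ∈ S | p.submodule ≤ W})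
  intro s hsS hsW
  have hs : s ∈ ({a} : Set (Pt F)) := ha ▸ (⟨hsS, hsW⟩ : s ∈ {p ∈ S | p.submodule ≤ W})
  rw [Set.mem_singleton_iff] at hu hs
  rw [hs, hu]

lemma three_le_secant [Fintype F] {S : Set (Pt F)} {W : Submodule F (Fin 3 → F)} {a b c : Pt F}
    (ha : a ∈ S) (hb : b ∈ S) (hc : c ∈ S) (hab : a ≠ b) (hac : a ≠ c) (hbc : b ≠ c)
    (haW : a.submodule ≤ W) (hbW : b.submodule ≤ W) (hcW : c.submodule ≤ W) :
    3 ≤ secantCount F S W := by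
  have hsub : ({a, b, c} : Set (Pt F)) ⊆ {p ∈ S | p.submodule ≤ W} := by
    rintro t (rfl | rfl | rfl) <;> exact ⟨by assumption, by assumption⟩
  have h3 : ({a, b, c} : Set (Pt F)).ncard = 3 := by
    rw [Set.ncard_insert_of_notMem (by simp [hab, hac]),
      Set.ncard_pair hbc]
  calc 3 = ({a, b, c} : Set (Pt F)).ncard := h3.symm
    _ ≤ _ := Set.ncard_le_ncard hsub (Set.toFinite _)

lemma secant_two_eq [Fintype F] {S : Set (Pt F)} {W : Submodule F (Fin 3 → F)} {a b : Pt F}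
    (h2 : secantCount F S W = 2)
    (ha : a ∈ S) (hb : b ∈ S) (hab : a ≠ b)
    (haW : a.submodule ≤ W) (hbW : b.submodule ≤ W) :
    {p ∈ S | p.submodule ≤ W} = {a, b} := by
  have h2' : ({p ∈ S | p.submodule ≤ W}).ncard = 2 := h2
  have hsub : ({a, b} : Set (Pt F)) ⊆ {p ∈ S | p.submodule ≤ W} := by
    rintro t (rfl | rfl) <;> exact ⟨by assumption, by assumption⟩
  have hc2 : ({a, b} : Set (Pt F)).ncard = 2 := Set.ncard_pair hab
  exact (Set.eq_of_subset_of_ncard_le hsub (by rw [h2', hc2]) (Set.toFinite _)).symm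

lemma secant_three_eq [Fintype F] {S : Set (Pt F)} {W : Submodule F (Fin 3 → F)} {a b c : Pt F}
    (h3 : secantCount F S W = 3)
    (ha : a ∈ S) (hb : b ∈ S) (hc : c ∈ S) (hab : a ≠ b) (hac : a ≠ c) (hbc : b ≠ c)
    (haW : a.submodule ≤ W) (hbW : b.submodule ≤ W) (hcW : c.submodule ≤ W) :
    {p ∈ S | p.submodule ≤ W} = {a, b, c} := by
  have h3' : ({p ∈ S | p.submodule ≤ W}).ncard = 3 := h3
  have hsub : ({a, b, c} : Set (Pt F)) ⊆ {p ∈ S | p.submodule ≤ W} := by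
    rintro t (rfl | rfl | rfl) <;> exact ⟨by assumption, by assumption⟩
  have hc3 : ({a, b, c} : Set (Pt F)).ncard = 3 := by
    rw [Set.ncard_insert_of_notMem (by simp [hab, hac]), Set.ncard_pair hbc]
  exact (Set.eq_of_subset_of_ncard_le hsub (by rw [h3', hc3]) (Set.toFinite _)).symm

lemma bisecant_count [Fintype F] (S : Set (Pt F)) (hS : S.ncard = Fintype.card F + 2)
    {u : Pt F} (huS : u ∈ S)
    (hu2 : linesThroughWithCount F S u 2 = Fintype.card F - 1)
    {Wt : Submodule F (Fin 3 → F)} (hWt : IsLine F Wt) (huWt : u.submodule ≤ Wt)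
    (hWt3 : secantCount F S Wt = 3) :
    ∀ s ∈ S, ¬ s.submodule ≤ Wt → secantCount F S (u.submodule ⊔ s.submodule) = 2 := by
  classical
  set q := Fintype.card F with hqdef
  set A2 := {W : Submodule F (Fin 3 → F) | IsLine F W ∧ u.submodule ≤ W ∧ secantCount F S W = 2}
    with hA2
  have hA2card : A2.ncard = q - 1 := hu2
  set D := {s ∈ S | s.submodule ≤ Wt} with hD
  have hDcard : D.ncard = 3 := hWt3
  have huD : u ∈ D := ⟨huS, huWt⟩
  have hchoice : ∀ W ∈ A2, ∃ t, t ∈ S ∧ t.submodule ≤ W ∧ t ≠ u ∧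
      ∀ r ∈ S, r.submodule ≤ W → r = u ∨ r = t := by
    intro W hW
    obtain ⟨hWl, huW, hW2⟩ := hW
    have hW2' : ({p ∈ S | p.submodule ≤ W}).ncard = 2 := hW2
    obtain ⟨a, b, hab, hset⟩ := Set.ncard_eq_two.1 hW2'
    have hmem : ∀ r, r ∈ S → r.submodule ≤ W → r = a ∨ r = b := by
      intro r hrS hrW
      have : r ∈ ({a, b} : Set (Pt F)) := hset ▸ (⟨hrS, hrW⟩ : r ∈ {p ∈ S | p.submodule ≤ W})
      simpa using this
    have haS : a ∈ ({p ∈ S | p.submodule ≤ W}) := hset ▸ (by simp : a ∈ ({a, b} : Set (Pt F)))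
    have hbS : b ∈ ({p ∈ S | p.submodule ≤ W}) := hset ▸ (by simp : b ∈ ({a, b} : Set (Pt F)))
    rcases hmem u huS huW with rfl | rfl
    · exact ⟨b, hbS.1, hbS.2, hab.symm, fun r hr hrW => (hmem r hr hrW).imp id id⟩
    · exact ⟨a, haS.1, haS.2, hab, fun r hr hrW => ((hmem r hr hrW).symm).imp id id⟩
  choose! g hgS hgW hgu hguniq using hchoice
  have hlines : ∀ W ∈ A2, W = u.submodule ⊔ (g W).submodule := by
    intro W hW
    exact line_eq_sup (Ne.symm (hgu W hW)) hW.1 hW.2.1 (hgW W hW)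
  have hinj : Set.InjOn g A2 := by
    intro W hW W' hW' hgg
    rw [hlines W hW, hlines W' hW', hgg]
  have himage : g '' A2 ⊆ S \ D := by
    rintro t ⟨W, hW, rfl⟩
    refine ⟨hgS W hW, fun htD => ?_⟩
    have h2 : Wt = u.submodule ⊔ (g W).submodule :=
      line_eq_sup (Ne.symm (hgu W hW)) hWt huWt htD.2
    have : secantCount F S W = secantCount F S Wt := by rw [hlines W hW, h2]
    rw [hW.2.2, hWt3] at this
    omega
  have hcard1 : (g '' A2).ncard = q - 1 := by rw [Set.ncard_image_of_injOn hinj, hA2card]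
  have hDS : D ⊆ S := fun t ht => ht.1
  have hcard2 : (S \ D).ncard = q - 1 := by
    rw [Set.ncard_diff hDS (Set.toFinite _), hS, hDcard]
    have : 2 ≤ q := Fintype.one_lt_card
    omega
  have heq : g '' A2 = S \ D :=
    Set.eq_of_subset_of_ncard_le himage (by rw [hcard1, hcard2]) (Set.toFinite _)
  intro s hsS hsWt
  have hsD : s ∈ g '' A2 := heq ▸ (⟨hsS, fun h => hsWt h.2⟩ : s ∈ S \ D)
  obtain ⟨W, hWA, hgWs⟩ := hsD
  have h1 : W = u.submodule ⊔ s.submodule := by rw [← hgWs]; exact hlines W hWA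
  rw [← h1]
  exact hWA.2.2

lemma prod_nonzero_eq_neg_one [Fintype F] [DecidableEq F] :
    (∏ x ∈ Finset.univ.erase (0 : F), x) = -1 := by
  classical
  have hbij : ∏ x ∈ Finset.univ.erase (0:F), x = ∏ u : Fˣ, (u : F) := by
    refine (Finset.prod_bij (fun (u : Fˣ) _ => (u : F)) ?_ ?_ ?_ ?_).symm
    · intro u _
      exact Finset.mem_erase.2 ⟨u.ne_zero, Finset.mem_univ _⟩
    · intro a _ b _ h
      exact Units.ext h
    · intro b hb
      exact ⟨Units.mk0 b (Finset.mem_erase.1 hb).1, Finset.mem_univ _, rfl⟩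
    · intro u _
      rfl
  rw [hbij]
  calc ∏ u : Fˣ, (u : F) = ((∏ u : Fˣ, u : Fˣ) : F) := by
        rw [← Units.coeHom_apply, map_prod]
        rfl
    _ = -1 := by rw [FiniteField.prod_univ_units_id_eq_neg_one]; simp

lemma repr_reconstruct (e : Basis (Fin 3) F (Fin 3 → F)) (v : Fin 3 → F) :
    v = e.repr v 0 • e 0 + e.repr v 1 • e 1 + e.repr v 2 • e 2 := by
  have h := e.sum_repr v
  rw [Fin.sum_univ_three] at h
  exact h.symm

lemma repr_basis (e : Basis (Fin 3) F (Fin 3 → F)) (i j : Fin 3) :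
    e.repr (e i) j = if i = j then 1 else 0 := by
  rw [e.repr_self]
  exact Finsupp.single_apply

lemma cross_of_collinear (e : Basis (Fin 3) F (Fin 3 → F)) {m i j : Fin 3} (him : i ≠ m)
    (hjm : j ≠ m) {s t : Fin 3 → F} (h : t ∈ Submodule.span F {e m, s}) :
    e.repr t i * e.repr s j = e.repr s i * e.repr t j := by
  obtain ⟨α, β, rfl⟩ := Submodule.mem_span_pair.1 h
  simp only [map_add, map_smul, Finsupp.coe_add, Finsupp.coe_smul, Pi.add_apply, Pi.smul_apply,
    smul_eq_mul, repr_basis, if_neg (Ne.symm him), if_neg (Ne.symm hjm), mul_zero, zero_add]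
  ring

lemma collinear_x (e : Basis (Fin 3) F (Fin 3 → F)) {s t : Fin 3 → F}
    (hs1 : e.repr s 1 ≠ 0)
    (hcross : e.repr t 1 * e.repr s 2 = e.repr s 1 * e.repr t 2) :
    t ∈ Submodule.span F {e 0, s} := by
  set k := e.repr t 1 / e.repr s 1 with hk
  have hks1 : k * e.repr s 1 = e.repr t 1 := by rw [hk]; field_simp
  have hks2 : k * e.repr s 2 = e.repr t 2 := by
    rw [hk]
    field_simp
    linear_combination hcross
  refine Submodule.mem_span_pair.2 ⟨e.repr t 0 - k * e.repr s 0, k, ?_⟩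
  calc (e.repr t 0 - k * e.repr s 0) • e 0 + k • s
      = (e.repr t 0 - k * e.repr s 0) • e 0
        + k • (e.repr s 0 • e 0 + e.repr s 1 • e 1 + e.repr s 2 • e 2) := by
        rw [← repr_reconstruct]
    _ = e.repr t 0 • e 0 + (k * e.repr s 1) • e 1 + (k * e.repr s 2) • e 2 := by module
    _ = e.repr t 0 • e 0 + e.repr t 1 • e 1 + e.repr t 2 • e 2 := by rw [hks1, hks2]
    _ = t := (repr_reconstruct e t).symm

lemma collinear_y (e : Basis (Fin 3) F (Fin 3 → F)) {s t : Fin 3 → F}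
    (hs0 : e.repr s 0 ≠ 0)
    (hcross : e.repr t 0 * e.repr s 2 = e.repr s 0 * e.repr t 2) :
    t ∈ Submodule.span F {e 1, s} := by
  set k := e.repr t 0 / e.repr s 0 with hk
  have hks0 : k * e.repr s 0 = e.repr t 0 := by rw [hk]; field_simp
  have hks2 : k * e.repr s 2 = e.repr t 2 := by
    rw [hk]
    field_simp
    linear_combination hcross
  refine Submodule.mem_span_pair.2 ⟨e.repr t 1 - k * e.repr s 1, k, ?_⟩
  calc (e.repr t 1 - k * e.repr s 1) • e 1 + k • s
      = (e.repr t 1 - k * e.repr s 1) • e 1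
        + k • (e.repr s 0 • e 0 + e.repr s 1 • e 1 + e.repr s 2 • e 2) := by
        rw [← repr_reconstruct]
    _ = (k * e.repr s 0) • e 0 + e.repr t 1 • e 1 + (k * e.repr s 2) • e 2 := by module
    _ = e.repr t 0 • e 0 + e.repr t 1 • e 1 + e.repr t 2 • e 2 := by rw [hks0, hks2]
    _ = t := (repr_reconstruct e t).symm

lemma collinear_z (e : Basis (Fin 3) F (Fin 3 → F)) {s t : Fin 3 → F}
    (hs0 : e.repr s 0 ≠ 0)
    (hcross : e.repr t 0 * e.repr s 1 = e.repr s 0 * e.repr t 1) :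
    t ∈ Submodule.span F {e 2, s} := by
  set k := e.repr t 0 / e.repr s 0 with hk
  have hks0 : k * e.repr s 0 = e.repr t 0 := by rw [hk]; field_simp
  have hks1 : k * e.repr s 1 = e.repr t 1 := by
    rw [hk]
    field_simp
    linear_combination hcross
  refine Submodule.mem_span_pair.2 ⟨e.repr t 2 - k * e.repr s 2, k, ?_⟩
  calc (e.repr t 2 - k * e.repr s 2) • e 2 + k • s
      = (e.repr t 2 - k * e.repr s 2) • e 2
        + k • (e.repr s 0 • e 0 + e.repr s 1 • e 1 + e.repr s 2 • e 2) := by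
        rw [← repr_reconstruct]
    _ = (k * e.repr s 0) • e 0 + (k * e.repr s 1) • e 1 + e.repr t 2 • e 2 := by module
    _ = e.repr t 0 • e 0 + e.repr t 1 • e 1 + e.repr t 2 • e 2 := by rw [hks0, hks1]
    _ = t := (repr_reconstruct e t).symm

lemma mem_span_01 (e : Basis (Fin 3) F (Fin 3 → F)) {v : Fin 3 → F} (hv : e.repr v 2 = 0) :
    v ∈ Submodule.span F {e 0, e 1} := by
  refine Submodule.mem_span_pair.2 ⟨e.repr v 0, e.repr v 1, ?_⟩
  conv_rhs => rw [repr_reconstruct e v]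
  rw [hv, zero_smul, add_zero]

lemma repr_zero_of_mem_span (e : Basis (Fin 3) F (Fin 3 → F)) {i j k : Fin 3}
    (hik : i ≠ k) (hjk : j ≠ k) {v : Fin 3 → F}
    (hv : v ∈ Submodule.span F {e i, e j}) : e.repr v k = 0 := by
  obtain ⟨α, β, rfl⟩ := Submodule.mem_span_pair.1 hv
  simp [map_add, map_smul, Finsupp.single_apply, hik, hjk]

end ThreeSecAux

set_option maxHeartbeats 4000000 in
/-- If `x, y, z ∈ S_{4/3}` lie on a nondegenerate conic whose tangent lines at `x, y, z` are
the tangents to `S` there, the line joining `x` and `y` is the `3`-secant to `S` at `x` (and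
at `y`), and the lines joining `z` to `x` and to `y` are bi-secants, then the `3`-secant to
`S` at `z` passes through the third point of `S` on the line through `x` and `y`. -/
theorem three_secant_through_third_point (F : Type) [Field F] [Fintype F]
    (hq : Odd (Fintype.card F))
    (S : Set (Pt F)) (hS : S.ncard = Fintype.card F + 2)
    (x y z : Pt F) (hx : x ∈ S43 F S) (hy : y ∈ S43 F S) (hz : z ∈ S43 F S)
    (hxy : x ≠ y) (hxz : x ≠ z) (hyz : y ≠ z)
    (h3xy : secantCount F S (x.submodule ⊔ y.submodule) = 3)
    (hbixz : secantCount F S (x.submodule ⊔ z.submodule) = 2)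
    (hbiyz : secantCount F S (y.submodule ⊔ z.submodule) = 2)
    (Q : QuadraticForm F (Fin 3 → F))
    (hQnd : LinearMap.BilinForm.Nondegenerate (QuadraticMap.polarBilin Q))
    (hQx : Q x.rep = 0) (hQy : Q y.rep = 0) (hQz : Q z.rep = 0)
    (htan : ∀ u ∈ ({x, y, z} : Set (Pt F)), ∀ W : Submodule F (Fin 3 → F),
      IsLine F W → u.submodule ≤ W → secantCount F S W = 1 →
      W = LinearMap.ker (QuadraticMap.polarBilin Q u.rep)) :
    ∀ W : Submodule F (Fin 3 → F), IsLine F W → z.submodule ≤ W → secantCount F S W = 3 →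
      ∀ p ∈ S, p.submodule ≤ x.submodule ⊔ y.submodule → p ≠ x → p ≠ y →
        p.submodule ≤ W := by
  classical
  intro W hW hzW hW3 p hpS hpxy hpx hpy
  by_contra hpW
  obtain ⟨hxS, hx1, hx3, hx2⟩ := hx
  obtain ⟨hyS, hy1, hy3, hy2⟩ := hy
  obtain ⟨hzS, hz1, hz3, hz2⟩ := hz
  have hq2 : 2 ≤ Fintype.card F := Fintype.one_lt_card
  have hxyL : IsLine F (x.submodule ⊔ y.submodule) := isLine_sup hxy
  -- z is not on the line xy
  have hzxy : ¬ z.submodule ≤ x.submodule ⊔ y.submodule := by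
    intro h
    have he : x.submodule ⊔ y.submodule = x.submodule ⊔ z.submodule :=
      line_eq_sup hxz hxyL le_sup_left h
    rw [he, hbixz] at h3xy
    omega
  have hpz : p ≠ z := fun h => hzxy (h ▸ hpxy)
  -- point sets on the relevant lines
  have hDxy : {s ∈ S | s.submodule ≤ x.submodule ⊔ y.submodule} = {x, y, p} :=
    secant_three_eq h3xy hxS hyS hpS hxy (Ne.symm hpx) (Ne.symm hpy)
      le_sup_left le_sup_right hpxy
  have hDxz : {s ∈ S | s.submodule ≤ x.submodule ⊔ z.submodule} = {x, z} :=
    secant_two_eq hbixz hxS hzS hxz le_sup_left le_sup_right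
  have hDyz : {s ∈ S | s.submodule ≤ y.submodule ⊔ z.submodule} = {y, z} :=
    secant_two_eq hbiyz hyS hzS hyz le_sup_left le_sup_right
  -- x, y, p are not on W
  have hxW : ¬ x.submodule ≤ W := by
    intro h
    have he : W = x.submodule ⊔ z.submodule := line_eq_sup hxz hW h hzW
    rw [he, hbixz] at hW3
    omega
  have hyW : ¬ y.submodule ≤ W := by
    intro h
    have he : W = y.submodule ⊔ z.submodule := line_eq_sup hyz hW h hzW
    rw [he, hbiyz] at hW3
    omega
  -- the two further points of S on W
  have hW3' : ({s ∈ S | s.submodule ≤ W}).ncard = 3 := hW3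
  obtain ⟨a0, b0, c0, hab0, hac0, hbc0, hset0⟩ := Set.ncard_eq_three.1 hW3'
  have hzmem0 : z ∈ ({a0, b0, c0} : Set (Pt F)) := hset0 ▸ (⟨hzS, hzW⟩ : z ∈ {s ∈ S | s.submodule ≤ W})
  obtain ⟨s1, s2, hzs1, hzs2, hs12, hDW⟩ : ∃ s1 s2 : Pt F, z ≠ s1 ∧ z ≠ s2 ∧ s1 ≠ s2 ∧
      {s ∈ S | s.submodule ≤ W} = {z, s1, s2} := by
    rcases hzmem0 with rfl | rfl | rfl
    · exact ⟨b0, c0, hab0, hac0, hbc0, hset0⟩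
    · exact ⟨a0, c0, Ne.symm hab0, hbc0, hac0, by rw [hset0]; ext t; simp; tauto⟩
    · exact ⟨a0, b0, Ne.symm hac0, Ne.symm hbc0, hab0, by rw [hset0]; ext t; simp; tauto⟩
  have hs1mem : s1 ∈ {s ∈ S | s.submodule ≤ W} := by rw [hDW]; simp
  have hs2mem : s2 ∈ {s ∈ S | s.submodule ≤ W} := by rw [hDW]; simp
  have hs1S : s1 ∈ S := hs1mem.1
  have hs2S : s2 ∈ S := hs2mem.1
  have hs1W : s1.submodule ≤ W := hs1mem.2
  have hs2W : s2.submodule ≤ W := hs2mem.2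
  -- T is S minus the four special points
  set T : Set (Pt F) := S \ {x, y, z, p} with hT
  have hs1T : s1 ∈ T := by
    refine ⟨hs1S, ?_⟩
    rintro (rfl | rfl | rfl | rfl)
    exacts [hxW hs1W, hyW hs1W, hzs1 rfl, hpW hs1W]
  have hs2T : s2 ∈ T := by
    refine ⟨hs2S, ?_⟩
    rintro (rfl | rfl | rfl | rfl)
    exacts [hxW hs2W, hyW hs2W, hzs2 rfl, hpW hs2W]
  have hTmem : ∀ s ∈ T, s ∈ S ∧ s ≠ x ∧ s ≠ y ∧ s ≠ z ∧ s ≠ p := by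
    intro s hs
    refine ⟨hs.1, ?_, ?_, ?_, ?_⟩ <;> intro h <;> exact hs.2 (by simp [h])
  -- the bisecant lemmas
  have hBx : ∀ s ∈ S, ¬ s.submodule ≤ x.submodule ⊔ y.submodule →
      secantCount F S (x.submodule ⊔ s.submodule) = 2 :=
    bisecant_count S hS hxS hx2 hxyL le_sup_left h3xy
  have hBy : ∀ s ∈ S, ¬ s.submodule ≤ x.submodule ⊔ y.submodule →
      secantCount F S (y.submodule ⊔ s.submodule) = 2 :=
    bisecant_count S hS hyS hy2 hxyL le_sup_right h3xy
  have hBz : ∀ s ∈ S, ¬ s.submodule ≤ W →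
      secantCount F S (z.submodule ⊔ s.submodule) = 2 :=
    bisecant_count S hS hzS hz2 hW hzW hW3
  -- tangent lines
  have hker : ∀ u : Pt F, u ∈ ({x, y, z} : Set (Pt F)) → u ∈ S →
      linesThroughWithCount F S u 1 = 1 → Q u.rep = 0 →
      ∀ s ∈ S, s ≠ u → QuadraticMap.polar (⇑Q) u.rep s.rep ≠ 0 := by
    intro u humem huS hu1 hQu s hsS hsu h0
    have hu1' : ({W : Submodule F (Fin 3 → F) |
        IsLine F W ∧ u.submodule ≤ W ∧ secantCount F S W = 1}).ncard = 1 := hu1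
    obtain ⟨Wt, hWt⟩ := Set.ncard_eq_one.1 hu1'
    have hWtmem : Wt ∈ {W : Submodule F (Fin 3 → F) |
        IsLine F W ∧ u.submodule ≤ W ∧ secantCount F S W = 1} := by
      rw [hWt]; rfl
    obtain ⟨hWtL, hWtu, hWt1⟩ := hWtmem
    have hKt : Wt = LinearMap.ker (QuadraticMap.polarBilin Q u.rep) :=
      htan u humem Wt hWtL hWtu hWt1
    have hsmem : s.rep ∈ Wt := by
      rw [hKt, LinearMap.mem_ker]
      have : (QuadraticMap.polarBilin Q u.rep) s.rep = QuadraticMap.polar (⇑Q) u.rep s.rep :=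
        QuadraticMap.polarBilin_apply_apply Q u.rep s.rep
      rw [this, h0]
    exact hsu (secant_one_eq hWt1 huS hWtu s hsS ((pt_le_iff _ _).2 hsmem))
  have hTx : ∀ s ∈ S, s ≠ x → QuadraticMap.polar (⇑Q) x.rep s.rep ≠ 0 :=
    hker x (by simp) hxS hx1 hQx
  have hTy : ∀ s ∈ S, s ≠ y → QuadraticMap.polar (⇑Q) y.rep s.rep ≠ 0 :=
    hker y (by simp) hyS hy1 hQy
  have hTz : ∀ s ∈ S, s ≠ z → QuadraticMap.polar (⇑Q) z.rep s.rep ≠ 0 :=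
    hker z (by simp) hzS hz1 hQz
  -- basis from the three points
  have hxyzli : LinearIndependent F ![x.rep, y.rep, z.rep] := by
    have hcons : (![x.rep, y.rep, z.rep] : Fin 3 → Fin 3 → F)
        = Fin.cons x.rep ![y.rep, z.rep] := by
      ext i j
      fin_cases i <;> rfl
    rw [hcons, linearIndependent_fin_cons]
    refine ⟨pair_li hyz, ?_⟩
    rw [pair_range]
    intro hmem
    have hle : x.submodule ≤ y.submodule ⊔ z.submodule := by
      rw [sup_eq_span]
      exact (pt_le_iff _ _).2 hmem
    have he : y.submodule ⊔ z.submodule = x.submodule ⊔ y.submodule :=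
      line_eq_sup hxy (isLine_sup hyz) hle le_sup_left
    rw [he, h3xy] at hbiyz
    omega
  obtain ⟨e, he⟩ : ∃ e : Module.Basis (Fin 3) F (Fin 3 → F), ⇑e = ![x.rep, y.rep, z.rep] :=
    ⟨basisOfLinearIndependentOfCardEqFinrank hxyzli
      (by rw [Module.finrank_fin_fun F]; simp),
      coe_basisOfLinearIndependentOfCardEqFinrank _ _⟩
  have he0 : e 0 = x.rep := by rw [he]; rfl
  have he1 : e 1 = y.rep := by rw [he]; rfl
  have he2 : e 2 = z.rep := by rw [he]; rfl
  -- span identifications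
  have hspan01 : x.submodule ⊔ y.submodule = Submodule.span F {e 0, e 1} := by
    rw [sup_eq_span, he0, he1]
  have hspan02 : x.submodule ⊔ z.submodule = Submodule.span F {e 0, e 2} := by
    rw [sup_eq_span, he0, he2]
  have hspan12 : y.submodule ⊔ z.submodule = Submodule.span F {e 1, e 2} := by
    rw [sup_eq_span, he1, he2]
  -- coordinate nonvanishing
  have hc2ne : ∀ s ∈ S, s ≠ x → s ≠ y → s ≠ p → e.repr s.rep 2 ≠ 0 := by
    intro s hsS hsx hsy hsp h0
    have hle : s.submodule ≤ x.submodule ⊔ y.submodule := by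
      rw [hspan01]
      exact (pt_le_iff _ _).2 (mem_span_01 e h0)
    have : s ∈ ({x, y, p} : Set (Pt F)) := hDxy ▸ (⟨hsS, hle⟩ : s ∈ {s ∈ S | s.submodule ≤ x.submodule ⊔ y.submodule})
    rcases this with rfl | rfl | rfl
    exacts [hsx rfl, hsy rfl, hsp rfl]
  have hc1ne : ∀ s ∈ S, s ≠ x → s ≠ z → e.repr s.rep 1 ≠ 0 := by
    intro s hsS hsx hsz h0
    have hle : s.submodule ≤ x.submodule ⊔ z.submodule := by
      rw [hspan02]
      refine (pt_le_iff _ _).2 (Submodule.mem_span_pair.2 ⟨e.repr s.rep 0, e.repr s.rep 2, ?_⟩)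
      conv_rhs => rw [repr_reconstruct e s.rep]
      rw [h0, zero_smul, add_zero]
    have : s ∈ ({x, z} : Set (Pt F)) := hDxz ▸ (⟨hsS, hle⟩ : s ∈ {s ∈ S | s.submodule ≤ x.submodule ⊔ z.submodule})
    rcases this with rfl | rfl
    exacts [hsx rfl, hsz rfl]
  have hc0ne : ∀ s ∈ S, s ≠ y → s ≠ z → e.repr s.rep 0 ≠ 0 := by
    intro s hsS hsy hsz h0
    have hle : s.submodule ≤ y.submodule ⊔ z.submodule := by
      rw [hspan12]
      refine (pt_le_iff _ _).2 (Submodule.mem_span_pair.2 ⟨e.repr s.rep 1, e.repr s.rep 2, ?_⟩)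
      conv_rhs => rw [repr_reconstruct e s.rep]
      rw [h0, zero_smul, zero_add]
    have : s ∈ ({y, z} : Set (Pt F)) := hDyz ▸ (⟨hsS, hle⟩ : s ∈ {s ∈ S | s.submodule ≤ y.submodule ⊔ z.submodule})
    rcases this with rfl | rfl
    exacts [hsy rfl, hsz rfl]
  -- polar coefficients
  set aa := QuadraticMap.polar (⇑Q) x.rep y.rep with haa
  set bb := QuadraticMap.polar (⇑Q) x.rep z.rep with hbb
  set cc := QuadraticMap.polar (⇑Q) y.rep z.rep with hcc
  have ha0 : aa ≠ 0 := hTx y hyS (Ne.symm hxy)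
  have hb0 : bb ≠ 0 := hTx z hzS (Ne.symm hxz)
  have hc0 : cc ≠ 0 := hTy z hzS (Ne.symm hyz)
  have hpolxx : QuadraticMap.polar (⇑Q) x.rep x.rep = 0 := by
    rw [QuadraticMap.polar_self, hQx, smul_zero]
  have hpolyy : QuadraticMap.polar (⇑Q) y.rep y.rep = 0 := by
    rw [QuadraticMap.polar_self, hQy, smul_zero]
  have hpolzz : QuadraticMap.polar (⇑Q) z.rep z.rep = 0 := by
    rw [QuadraticMap.polar_self, hQz, smul_zero]
  -- polar expansions
  have hpolx : ∀ v : Fin 3 → F, QuadraticMap.polar (⇑Q) x.rep v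
      = e.repr v 1 * aa + e.repr v 2 * bb := by
    intro v
    conv_lhs => rw [repr_reconstruct e v, he0, he1, he2]
    rw [QuadraticMap.polar_add_right, QuadraticMap.polar_add_right,
      QuadraticMap.polar_smul_right, QuadraticMap.polar_smul_right,
      QuadraticMap.polar_smul_right, hpolxx, haa, hbb]
    simp only [smul_eq_mul, mul_zero]
    ring
  have hpoly : ∀ v : Fin 3 → F, QuadraticMap.polar (⇑Q) y.rep v
      = e.repr v 0 * aa + e.repr v 2 * cc := by
    intro v
    conv_lhs => rw [repr_reconstruct e v, he0, he1, he2]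
    rw [QuadraticMap.polar_add_right, QuadraticMap.polar_add_right,
      QuadraticMap.polar_smul_right, QuadraticMap.polar_smul_right,
      QuadraticMap.polar_smul_right, hpolyy,
      QuadraticMap.polar_comm (⇑Q) y.rep x.rep, haa, hcc]
    simp only [smul_eq_mul, mul_zero]
    ring
  have hpolz : ∀ v : Fin 3 → F, QuadraticMap.polar (⇑Q) z.rep v
      = e.repr v 0 * bb + e.repr v 1 * cc := by
    intro v
    conv_lhs => rw [repr_reconstruct e v, he0, he1, he2]
    rw [QuadraticMap.polar_add_right, QuadraticMap.polar_add_right,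
      QuadraticMap.polar_smul_right, QuadraticMap.polar_smul_right,
      QuadraticMap.polar_smul_right, hpolzz,
      QuadraticMap.polar_comm (⇑Q) z.rep x.rep, QuadraticMap.polar_comm (⇑Q) z.rep y.rep,
      hbb, hcc]
    simp only [smul_eq_mul, mul_zero]
    ring
  have hTx' : ∀ s ∈ S, s ≠ x → e.repr s.rep 1 * aa + e.repr s.rep 2 * bb ≠ 0 := by
    intro s hsS hsx
    have := hTx s hsS hsx
    rwa [hpolx] at this
  have hTy' : ∀ s ∈ S, s ≠ y → e.repr s.rep 0 * aa + e.repr s.rep 2 * cc ≠ 0 := by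
    intro s hsS hsy
    have := hTy s hsS hsy
    rwa [hpoly] at this
  have hTz' : ∀ s ∈ S, s ≠ z → e.repr s.rep 0 * bb + e.repr s.rep 1 * cc ≠ 0 := by
    intro s hsS hsz
    have := hTz s hsS hsz
    rwa [hpolz] at this
  -- T as a finset
  have hTfin : T.Finite := Set.toFinite T
  set Tf : Finset (Pt F) := hTfin.toFinset with hTfdef
  have hTfmem : ∀ s : Pt F, s ∈ Tf ↔ s ∈ T := fun s => Set.Finite.mem_toFinset _
  have hTcard : T.ncard = Fintype.card F + 2 - 4 := by
    have hsub4 : ({x, y, z, p} : Set (Pt F)) ⊆ S := by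
      rintro t (rfl | rfl | rfl | rfl)
      exacts [hxS, hyS, hzS, hpS]
    have hc4 : ({x, y, z, p} : Set (Pt F)).ncard = 4 := by
      rw [Set.ncard_insert_of_notMem (by simp [hxy, hxz, Ne.symm hpx]),
        Set.ncard_insert_of_notMem (by simp [hyz, Ne.symm hpy]),
        Set.ncard_insert_of_notMem (by simp [Ne.symm hpz]),
        Set.ncard_singleton]
    rw [hT, Set.ncard_diff hsub4 (Set.toFinite _), hS, hc4]
  have hTfcard : Tf.card = Fintype.card F + 2 - 4 := by
    rw [← hTcard, Set.ncard_eq_toFinset_card T hTfin]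
  -- membership in lines through the vertices
  have hnotxy : ∀ s ∈ T, ¬ s.submodule ≤ x.submodule ⊔ y.submodule := by
    intro s hs hle
    obtain ⟨hsS, hsx, hsy, hsz, hsp⟩ := hTmem s hs
    exact hc2ne s hsS hsx hsy hsp
      (repr_zero_of_mem_span e (by decide) (by decide) ((pt_le_iff _ _).1 (hspan01 ▸ hle)))
  have hnotW : ∀ s ∈ T, s ≠ s1 → s ≠ s2 → ¬ s.submodule ≤ W := by
    intro s hs hss1 hss2 hle
    obtain ⟨hsS, hsx, hsy, hsz, hsp⟩ := hTmem s hs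
    have : s ∈ ({z, s1, s2} : Set (Pt F)) := hDW ▸ (⟨hsS, hle⟩ : s ∈ {s ∈ S | s.submodule ≤ W})
    rcases this with rfl | rfl | rfl
    exacts [hsz rfl, hss1 rfl, hss2 rfl]
  -- collision lemma for projections from the three vertices
  have hcollX : ∀ s ∈ T, ∀ t ∈ T, t ≠ s →
      ¬ (t.rep ∈ Submodule.span F {e 0, s.rep}) := by
    intro s hs t ht hts hmem
    obtain ⟨hsS, hsx, hsy, hsz, hsp⟩ := hTmem s hs
    obtain ⟨htS, htx, hty, htz, htp⟩ := hTmem t ht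
    have hle : t.submodule ≤ x.submodule ⊔ s.submodule := by
      rw [sup_eq_span, ← he0]
      exact (pt_le_iff _ _).2 hmem
    have h2 : secantCount F S (x.submodule ⊔ s.submodule) = 2 := hBx s hsS (hnotxy s hs)
    have h3 : 3 ≤ secantCount F S (x.submodule ⊔ s.submodule) :=
      three_le_secant hxS hsS htS (Ne.symm hsx) (Ne.symm htx) (Ne.symm hts)
        le_sup_left le_sup_right hle
    omega
  have hcollY : ∀ s ∈ T, ∀ t ∈ T, t ≠ s →
      ¬ (t.rep ∈ Submodule.span F {e 1, s.rep}) := by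
    intro s hs t ht hts hmem
    obtain ⟨hsS, hsx, hsy, hsz, hsp⟩ := hTmem s hs
    obtain ⟨htS, htx, hty, htz, htp⟩ := hTmem t ht
    have hle : t.submodule ≤ y.submodule ⊔ s.submodule := by
      rw [sup_eq_span, ← he1]
      exact (pt_le_iff _ _).2 hmem
    have h2 : secantCount F S (y.submodule ⊔ s.submodule) = 2 := hBy s hsS (hnotxy s hs)
    have h3 : 3 ≤ secantCount F S (y.submodule ⊔ s.submodule) :=
      three_le_secant hyS hsS htS (Ne.symm hsy) (Ne.symm hty) (Ne.symm hts)
        le_sup_left le_sup_right hle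
    omega
  have hcollZ : ∀ s ∈ T, s ≠ s1 → s ≠ s2 → ∀ t ∈ S, t ≠ z → t ≠ s →
      ¬ (t.rep ∈ Submodule.span F {e 2, s.rep}) := by
    intro s hs hss1 hss2 t htS htz hts hmem
    obtain ⟨hsS, hsx, hsy, hsz, hsp⟩ := hTmem s hs
    have hle : t.submodule ≤ z.submodule ⊔ s.submodule := by
      rw [sup_eq_span, ← he2]
      exact (pt_le_iff _ _).2 hmem
    have h2 : secantCount F S (z.submodule ⊔ s.submodule) = 2 :=
      hBz s hsS (hnotW s hs hss1 hss2)
    have h3 : 3 ≤ secantCount F S (z.submodule ⊔ s.submodule) :=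
      three_le_secant hzS hsS htS (Ne.symm hsz) htz.symm hts.symm
        le_sup_left le_sup_right hle
    omega
  -- the three projection ratio maps
  set uf : Pt F → F := fun s => e.repr s.rep 2 / e.repr s.rep 1 with hufdef
  set vf : Pt F → F := fun s => e.repr s.rep 2 / e.repr s.rep 0 with hvfdef
  set wf : Pt F → F := fun s => e.repr s.rep 1 / e.repr s.rep 0 with hwfdef
  set tu : F := -(aa/bb) with htu
  set tv : F := -(aa/cc) with htv
  set tw : F := -(bb/cc) with htw
  have htu0 : tu ≠ 0 := by
    rw [htu]
    simp [ha0, hb0]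
  have htv0 : tv ≠ 0 := by
    rw [htv]
    simp [ha0, hc0]
  have htw0 : tw ≠ 0 := by
    rw [htw]
    simp [hb0, hc0]
  -- u-product
  have hinjU : ∀ s ∈ Tf, ∀ t ∈ Tf, uf s = uf t → s = t := by
    intro s hs t ht hust
    by_contra hst
    obtain ⟨hsS, hsx, hsy, hsz, hsp⟩ := hTmem s ((hTfmem s).1 hs)
    obtain ⟨htS, htx, hty, htz, htp⟩ := hTmem t ((hTfmem t).1 ht)
    have hs1 : e.repr s.rep 1 ≠ 0 := hc1ne s hsS hsx hsz
    have ht1 : e.repr t.rep 1 ≠ 0 := hc1ne t htS htx htz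
    have hcross : e.repr t.rep 1 * e.repr s.rep 2 = e.repr s.rep 1 * e.repr t.rep 2 := by
      rw [hufdef] at hust
      field_simp at hust
      linear_combination hust
    exact hcollX s ((hTfmem s).1 hs) t ((hTfmem t).1 ht) (Ne.symm hst)
      (collinear_x e hs1 hcross)
  have himU : Tf.image uf = (Finset.univ.erase (0:F)).erase tu := by
    apply Finset.eq_of_subset_of_card_le
    · intro k hk
      obtain ⟨s, hsTf, rfl⟩ := Finset.mem_image.1 hk
      obtain ⟨hsS, hsx, hsy, hsz, hsp⟩ := hTmem s ((hTfmem s).1 hsTf)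
      have hs1 : e.repr s.rep 1 ≠ 0 := hc1ne s hsS hsx hsz
      have hs2 : e.repr s.rep 2 ≠ 0 := hc2ne s hsS hsx hsy hsp
      refine Finset.mem_erase.2 ⟨?_, Finset.mem_erase.2 ⟨?_, Finset.mem_univ _⟩⟩
      · intro hkeq
        apply hTx' s hsS hsx
        rw [hufdef] at hkeq
        simp only at hkeq
        rw [htu] at hkeq
        field_simp at hkeq
        linear_combination hkeq
      · rw [hufdef]
        exact div_ne_zero hs2 hs1
    · have hcardim : (Tf.image uf).card = Tf.card :=
        Finset.card_image_of_injOn (fun s hs t ht => hinjU s hs t ht)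
      have hGcard : ((Finset.univ.erase (0:F)).erase tu).card = Fintype.card F - 2 := by
        rw [Finset.card_erase_of_mem (Finset.mem_erase.2 ⟨htu0, Finset.mem_univ _⟩),
          Finset.card_erase_of_mem (Finset.mem_univ _), Finset.card_univ]
        omega
      rw [hcardim, hTfcard, hGcard]
      omega
  have hprodU : (∏ s ∈ Tf, uf s) * tu = -1 := by
    have h1 : ∏ k ∈ Tf.image uf, k = ∏ s ∈ Tf, uf s :=
      Finset.prod_image (fun s hs t ht => hinjU s hs t ht)
    have h2 := Finset.prod_erase_mul (Finset.univ.erase (0:F)) (fun k => k)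
      (Finset.mem_erase.2 ⟨htu0, Finset.mem_univ _⟩)
    rw [prod_nonzero_eq_neg_one] at h2
    rw [← h1, himU]
    exact h2
  -- v-product
  have hinjV : ∀ s ∈ Tf, ∀ t ∈ Tf, vf s = vf t → s = t := by
    intro s hs t ht hvst
    by_contra hst
    obtain ⟨hsS, hsx, hsy, hsz, hsp⟩ := hTmem s ((hTfmem s).1 hs)
    obtain ⟨htS, htx, hty, htz, htp⟩ := hTmem t ((hTfmem t).1 ht)
    have hs0 : e.repr s.rep 0 ≠ 0 := hc0ne s hsS hsy hsz
    have ht0 : e.repr t.rep 0 ≠ 0 := hc0ne t htS hty htz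
    have hcross : e.repr t.rep 0 * e.repr s.rep 2 = e.repr s.rep 0 * e.repr t.rep 2 := by
      rw [hvfdef] at hvst
      field_simp at hvst
      linear_combination hvst
    exact hcollY s ((hTfmem s).1 hs) t ((hTfmem t).1 ht) (Ne.symm hst)
      (collinear_y e hs0 hcross)
  have himV : Tf.image vf = (Finset.univ.erase (0:F)).erase tv := by
    apply Finset.eq_of_subset_of_card_le
    · intro k hk
      obtain ⟨s, hsTf, rfl⟩ := Finset.mem_image.1 hk
      obtain ⟨hsS, hsx, hsy, hsz, hsp⟩ := hTmem s ((hTfmem s).1 hsTf)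
      have hs0 : e.repr s.rep 0 ≠ 0 := hc0ne s hsS hsy hsz
      have hs2 : e.repr s.rep 2 ≠ 0 := hc2ne s hsS hsx hsy hsp
      refine Finset.mem_erase.2 ⟨?_, Finset.mem_erase.2 ⟨?_, Finset.mem_univ _⟩⟩
      · intro hkeq
        apply hTy' s hsS hsy
        rw [hvfdef] at hkeq
        simp only at hkeq
        rw [htv] at hkeq
        field_simp at hkeq
        linear_combination hkeq
      · rw [hvfdef]
        exact div_ne_zero hs2 hs0
    · have hcardim : (Tf.image vf).card = Tf.card :=
        Finset.card_image_of_injOn (fun s hs t ht => hinjV s hs t ht)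
      have hGcard : ((Finset.univ.erase (0:F)).erase tv).card = Fintype.card F - 2 := by
        rw [Finset.card_erase_of_mem (Finset.mem_erase.2 ⟨htv0, Finset.mem_univ _⟩),
          Finset.card_erase_of_mem (Finset.mem_univ _), Finset.card_univ]
        omega
      rw [hcardim, hTfcard, hGcard]
      omega
  have hprodV : (∏ s ∈ Tf, vf s) * tv = -1 := by
    have h1 : ∏ k ∈ Tf.image vf, k = ∏ s ∈ Tf, vf s :=
      Finset.prod_image (fun s hs t ht => hinjV s hs t ht)
    have h2 := Finset.prod_erase_mul (Finset.univ.erase (0:F)) (fun k => k)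
      (Finset.mem_erase.2 ⟨htv0, Finset.mem_univ _⟩)
    rw [prod_nonzero_eq_neg_one] at h2
    rw [← h1, himV]
    exact h2
  -- the trisecant W through z revisited: W = z ⊔ s1
  have hWz1 : W = z.submodule ⊔ s1.submodule := line_eq_sup hzs1 hW hzW hs1W
  have hs2span : s2.rep ∈ Submodule.span F {e 2, s1.rep} := by
    have hle : s2.submodule ≤ z.submodule ⊔ s1.submodule := by rw [← hWz1]; exact hs2W
    rw [sup_eq_span, ← he2] at hle
    exact (pt_le_iff _ _).1 hle
  obtain ⟨_, hs1x, hs1y, hs1z, hs1p⟩ := hTmem s1 hs1T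
  obtain ⟨_, hs2x, hs2y, hs2z, hs2p⟩ := hTmem s2 hs2T
  have hs1c0 : e.repr s1.rep 0 ≠ 0 := hc0ne s1 hs1S hs1y hs1z
  have hs1c1 : e.repr s1.rep 1 ≠ 0 := hc1ne s1 hs1S hs1x hs1z
  have hpc0 : e.repr p.rep 0 ≠ 0 := hc0ne p hpS hpy hpz
  have hpc1 : e.repr p.rep 1 ≠ 0 := hc1ne p hpS hpx hpz
  set w0 : F := wf s1 with hw0def
  set wp : F := wf p with hwpdef
  have hw00 : w0 ≠ 0 := by
    rw [hw0def, hwfdef]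
    exact div_ne_zero hs1c1 hs1c0
  have hwp0 : wp ≠ 0 := by
    rw [hwpdef, hwfdef]
    exact div_ne_zero hpc1 hpc0
  have hw0tw : w0 ≠ tw := by
    intro h
    apply hTz' s1 hs1S hs1z
    rw [hw0def, hwfdef] at h
    simp only at h
    rw [htw] at h
    field_simp at h
    linear_combination h
  have hwptw : wp ≠ tw := by
    intro h
    apply hTz' p hpS hpz
    rw [hwpdef, hwfdef] at h
    simp only at h
    rw [htw] at h
    field_simp at h
    linear_combination h
  have hwfs2 : wf s2 = w0 := by
    have hcross := cross_of_collinear e (show (0:Fin 3) ≠ 2 by decide)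
      (show (1:Fin 3) ≠ 2 by decide) hs2span
    have hs2c0 : e.repr s2.rep 0 ≠ 0 := hc0ne s2 hs2S hs2y hs2z
    rw [hw0def, hwfdef]
    simp only
    field_simp
    linear_combination -hcross
  have hwpw0 : wp ≠ w0 := by
    intro h
    apply hpW
    have hcross : e.repr p.rep 0 * e.repr s1.rep 1 = e.repr s1.rep 0 * e.repr p.rep 1 := by
      rw [hwpdef, hw0def, hwfdef] at h
      simp only at h
      field_simp at h
      linear_combination -h
    have hmem := collinear_z e hs1c0 hcross
    rw [hWz1, sup_eq_span, ← he2]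
    exact (pt_le_iff _ _).2 hmem
  -- remove s1 s2 from Tf
  have hs1Tf : s1 ∈ Tf := (hTfmem s1).2 hs1T
  have hs2Tf' : s2 ∈ Tf.erase s1 := Finset.mem_erase.2 ⟨hs12.symm, (hTfmem s2).2 hs2T⟩
  set Tf2 : Finset (Pt F) := (Tf.erase s1).erase s2 with hTf2
  have hTf2mem : ∀ s : Pt F, s ∈ Tf2 → s ∈ T ∧ s ≠ s1 ∧ s ≠ s2 := by
    intro s hs
    rw [hTf2] at hs
    have h1 := Finset.mem_erase.1 hs
    have h2 := Finset.mem_erase.1 h1.2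
    exact ⟨(hTfmem s).1 h2.2, h2.1, h1.1⟩
  have hinjW : ∀ s ∈ Tf2, ∀ t ∈ Tf2, wf s = wf t → s = t := by
    intro s hs t ht hwst
    by_contra hst
    obtain ⟨hsT, hss1, hss2⟩ := hTf2mem s hs
    obtain ⟨htT, hts1, hts2⟩ := hTf2mem t ht
    obtain ⟨hsS, hsx, hsy, hsz, hsp⟩ := hTmem s hsT
    obtain ⟨htS, htx, hty, htz, htp⟩ := hTmem t htT
    have hs0 : e.repr s.rep 0 ≠ 0 := hc0ne s hsS hsy hsz
    have ht0 : e.repr t.rep 0 ≠ 0 := hc0ne t htS hty htz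
    have hcross : e.repr t.rep 0 * e.repr s.rep 1 = e.repr s.rep 0 * e.repr t.rep 1 := by
      rw [hwfdef] at hwst
      field_simp at hwst
      linear_combination hwst
    exact hcollZ s hsT hss1 hss2 t htS htz (Ne.symm hst) (collinear_z e hs0 hcross)
  set Gw : Finset F := (((Finset.univ.erase (0:F)).erase tw).erase w0).erase wp with hGw
  have hw0mem : w0 ∈ (Finset.univ.erase (0:F)).erase tw :=
    Finset.mem_erase.2 ⟨hw0tw, Finset.mem_erase.2 ⟨hw00, Finset.mem_univ _⟩⟩
  have hwpmem : wp ∈ ((Finset.univ.erase (0:F)).erase tw).erase w0 :=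
    Finset.mem_erase.2 ⟨hwpw0, Finset.mem_erase.2 ⟨hwptw,
      Finset.mem_erase.2 ⟨hwp0, Finset.mem_univ _⟩⟩⟩
  have himW : Tf2.image wf = Gw := by
    apply Finset.eq_of_subset_of_card_le
    · intro k hk
      obtain ⟨s, hsTf2, rfl⟩ := Finset.mem_image.1 hk
      obtain ⟨hsT, hss1, hss2⟩ := hTf2mem s hsTf2
      obtain ⟨hsS, hsx, hsy, hsz, hsp⟩ := hTmem s hsT
      have hs0 : e.repr s.rep 0 ≠ 0 := hc0ne s hsS hsy hsz
      have hs1' : e.repr s.rep 1 ≠ 0 := hc1ne s hsS hsx hsz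
      rw [hGw]
      refine Finset.mem_erase.2 ⟨?_, Finset.mem_erase.2 ⟨?_, Finset.mem_erase.2 ⟨?_,
        Finset.mem_erase.2 ⟨?_, Finset.mem_univ _⟩⟩⟩⟩
      · intro h
        have hcross : e.repr p.rep 0 * e.repr s.rep 1 = e.repr s.rep 0 * e.repr p.rep 1 := by
          rw [hwpdef, hwfdef] at h
          simp only at h
          field_simp at h
          linear_combination h
        exact hcollZ s hsT hss1 hss2 p hpS hpz (Ne.symm hsp) (collinear_z e hs0 hcross)
      · intro h
        have hcross : e.repr s.rep 0 * e.repr s1.rep 1 = e.repr s1.rep 0 * e.repr s.rep 1 := by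
          rw [hw0def, hwfdef] at h
          simp only at h
          field_simp at h
          linear_combination -h
        have hmem := collinear_z e hs1c0 hcross
        apply hnotW s hsT hss1 hss2
        rw [hWz1, sup_eq_span, ← he2]
        exact (pt_le_iff _ _).2 hmem
      · intro h
        apply hTz' s hsS hsz
        rw [hwfdef] at h
        simp only at h
        rw [htw] at h
        field_simp at h
        linear_combination h
      · rw [hwfdef]
        exact div_ne_zero hs1' hs0
    · have hcardim : (Tf2.image wf).card = Tf2.card :=
        Finset.card_image_of_injOn (fun s hs t ht => hinjW s hs t ht)
      have hGwcard : Gw.card = Fintype.card F - 4 := by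
        rw [hGw, Finset.card_erase_of_mem hwpmem, Finset.card_erase_of_mem hw0mem,
          Finset.card_erase_of_mem (Finset.mem_erase.2 ⟨htw0, Finset.mem_univ _⟩),
          Finset.card_erase_of_mem (Finset.mem_univ _), Finset.card_univ]
        omega
      have hTf2card : Tf2.card = Fintype.card F + 2 - 6 := by
        rw [hTf2, Finset.card_erase_of_mem hs2Tf', Finset.card_erase_of_mem hs1Tf, hTfcard]
        omega
      rw [hcardim, hGwcard, hTf2card]
      omega
  -- products
  have hprodsplit : ∏ s ∈ Tf, wf s = w0 * (w0 * ∏ s ∈ Tf2, wf s) := by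
    rw [← Finset.mul_prod_erase Tf wf hs1Tf, ← Finset.mul_prod_erase (Tf.erase s1) wf hs2Tf',
      hwfs2, ← hw0def, ← hTf2]
  have hprodW2 : (∏ s ∈ Tf2, wf s) * wp * w0 * tw = -1 := by
    have h1 : ∏ k ∈ Tf2.image wf, k = ∏ s ∈ Tf2, wf s :=
      Finset.prod_image (fun s hs t ht => hinjW s hs t ht)
    have h2 := Finset.prod_erase_mul ((((Finset.univ.erase (0:F)).erase tw).erase w0))
      (fun k => k) hwpmem
    have h3 := Finset.prod_erase_mul ((Finset.univ.erase (0:F)).erase tw) (fun k => k) hw0mem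
    have h4 := Finset.prod_erase_mul (Finset.univ.erase (0:F)) (fun k => k)
      (Finset.mem_erase.2 ⟨htw0, Finset.mem_univ _⟩)
    rw [prod_nonzero_eq_neg_one] at h4
    have h2' : (∏ k ∈ Gw, k) * wp = ∏ k ∈ ((Finset.univ.erase (0:F)).erase tw).erase w0, k := by
      rw [hGw]
      exact h2
    calc (∏ s ∈ Tf2, wf s) * wp * w0 * tw
        = ((∏ k ∈ Gw, k) * wp) * w0 * tw := by rw [← h1, himW]
      _ = -1 := by rw [h2', h3, h4]
  have hpointwise : ∀ s ∈ Tf, wf s = vf s / uf s := by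
    intro s hs
    obtain ⟨hsS, hsx, hsy, hsz, hsp⟩ := hTmem s ((hTfmem s).1 hs)
    have hs0 : e.repr s.rep 0 ≠ 0 := hc0ne s hsS hsy hsz
    have hs1' : e.repr s.rep 1 ≠ 0 := hc1ne s hsS hsx hsz
    have hs2' : e.repr s.rep 2 ≠ 0 := hc2ne s hsS hsx hsy hsp
    rw [hwfdef, hvfdef, hufdef]
    simp only
    field_simp
  have hprodVU : ∏ s ∈ Tf, wf s = (∏ s ∈ Tf, vf s) / (∏ s ∈ Tf, uf s) := by
    rw [Finset.prod_congr rfl hpointwise, Finset.prod_div_distrib]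
  -- final algebra
  have hPu0 : (∏ s ∈ Tf, uf s) ≠ 0 := by
    intro h
    rw [h, zero_mul] at hprodU
    exact (by norm_num : (0:F) ≠ -1) hprodU
  have E2 : (∏ s ∈ Tf, uf s) * aa = bb := by
    rw [htu] at hprodU
    field_simp at hprodU
    linear_combination -hprodU
  have E1 : (∏ s ∈ Tf, vf s) * aa = cc := by
    rw [htv] at hprodV
    field_simp at hprodV
    linear_combination -hprodV
  have E3 : (∏ s ∈ Tf2, wf s) * wp * w0 * bb = cc := by
    rw [htw] at hprodW2
    field_simp at hprodW2
    linear_combination -hprodW2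
  have E4 : (∏ s ∈ Tf, vf s) = (∏ s ∈ Tf, uf s) * (w0 * (w0 * ∏ s ∈ Tf2, wf s)) := by
    rw [← hprodsplit, hprodVU]
    field_simp
  have hPW20 : (∏ s ∈ Tf2, wf s) ≠ 0 := by
    intro h
    rw [h, zero_mul, zero_mul, zero_mul] at E3
    exact hc0 E3.symm
  have hfin : bb * w0 * (∏ s ∈ Tf2, wf s) * (wp - w0) = 0 := by
    linear_combination E3 - E1 + aa * E4 + w0 ^ 2 * (∏ s ∈ Tf2, wf s) * E2
  have hkey : wp = w0 := by
    rcases mul_eq_zero.1 hfin with h | h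
    · rcases mul_eq_zero.1 h with h' | h'
      · rcases mul_eq_zero.1 h' with h'' | h''
        · exact absurd h'' hb0
        · exact absurd h'' hw00
      · exact absurd h' hPW20
    · exact sub_eq_zero.1 h
  exact hwpw0 hkey
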